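/- arXiv:1501.01515 — 2 statements merged into one kernel-verified Lean document; each statement's English description precedes it below -/
import Mathlib

section
/- Let n ≥ 4 be an integer and let d₁, …, d_{n−3} be integers each at least 1, and set x = d₁ + ⋯ + d_{n−3}. Then n(n+1)/2 − Σ_{1≤i<j≤n−3} d_i d_j − (n+1)·x + x² > 0 (equivalently, n(n+1) − 2·Σ_{1≤i<j≤n−3} d_i d_j − 2(n+1)·x + 2x² > 0 as integers). -/
open Finset in
/-- Numerical core of Lemma 4.1: for `n ≥ 4` and degrees `d₁, …, d_{n-3} ≥ 1`
with `x = Σ d_j`, one has `n(n+1) - 2 Σ_{i<j} d_i d_j - 2(n+1)x + 2x² > 0`. -/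
theorem stmt_4 (n : ℕ) (hn : 4 ≤ n) (d : Fin (n - 3) → ℤ) (hd : ∀ i, 1 ≤ d i)
    (x : ℤ) (hx : x = ∑ i, d i) :
    0 < (n : ℤ) * (n + 1) - 2 * (∑ i, ∑ j ∈ Ioi i, d i * d j)
      - 2 * (n + 1) * x + 2 * x ^ 2 := by
  have h1 : ∑ i, ∑ j ∈ Ioi i, (d j * d i + d i * d j)
      = ∑ i, ∑ j ∈ univ.erase i, d j * d i := by
    simpa [Finset.compl_singleton] using
      sum_sum_Ioi_add_eq_sum_sum_off_diag (fun i j => d i * d j)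
  have h2 : ∀ i : Fin (n - 3), ∑ j ∈ univ.erase i, d j * d i = x * d i - d i * d i := by
    intro i
    have := Finset.add_sum_erase univ (fun j => d j * d i) (Finset.mem_univ i)
    have hx' : (∑ j, d j * d i) = x * d i := by rw [hx, Finset.sum_mul]
    linarith [this, hx']
  have h3 : 2 * (∑ i, ∑ j ∈ Ioi i, d i * d j) = x * x - ∑ i, d i * d i := by
    have : ∑ i, ∑ j ∈ Ioi i, (d j * d i + d i * d j)
        = 2 * (∑ i, ∑ j ∈ Ioi i, d i * d j) := by
      rw [Finset.mul_sum]
      refine Finset.sum_congr rfl fun i _ => ?_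
      rw [Finset.mul_sum]
      refine Finset.sum_congr rfl fun j _ => ?_
      ring
    rw [← this, h1]
    rw [Finset.sum_congr rfl fun i _ => h2 i, Finset.sum_sub_distrib, ← Finset.mul_sum, ← hx]
  have h4 : (2 * x - ((n : ℤ) - 3)) ≤ ∑ i, d i * d i := by
    have hcard : ((Finset.univ : Finset (Fin (n - 3))).card : ℤ) = (n : ℤ) - 3 := by
      simp [Nat.cast_sub (by omega : 3 ≤ n)]
    calc 2 * x - ((n : ℤ) - 3) = ∑ i, (2 * d i - 1) := by
          rw [Finset.sum_sub_distrib, ← Finset.mul_sum, ← hx, Finset.sum_const, ← hcard]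
          simp
      _ ≤ ∑ i, d i * d i := Finset.sum_le_sum fun i _ => by nlinarith [hd i]
  nlinarith [sq_nonneg (x - n)]
end

section
/- Let ℤ[i] denote the Gaussian integers, acting on ℂ through the natural ring embedding ℤ[i] → ℂ, let Λ = ℤ[i]·1 be the ℤ[i]-submodule of ℂ generated by 1, and let T = ℂ/Λ be the quotient ℤ[i]-module. Consider the map x ↦ i·x on the set S = {x ∈ T³ : i·(i·x) = x} (which has 64 elements). Then the quotient of S by the equivalence relation identifying x with i·x has exactly 36 elements. -/
open GaussianInt

/-- `ℂ` as a `ℤ[i]`-module via the natural ring embedding `ℤ[i] → ℂ`. -/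
noncomputable instance : Module GaussianInt ℂ :=
  Module.compHom ℂ GaussianInt.toComplex

namespace Step12

noncomputable abbrev Λ : Submodule GaussianInt ℂ :=
  Submodule.span GaussianInt ({1} : Set ℂ)

lemma gsmul_def (r : GaussianInt) (x : ℂ) : r • x = toComplex r * x := rfl

lemma toComplex_sqrtd : toComplex (Zsqrtd.sqrtd : GaussianInt) = Complex.I := by
  simp [Complex.ext_iff, toComplex_def, Zsqrtd.sqrtd]

lemma mem_Lambda {w : ℂ} : w ∈ Λ ↔ ∃ z : GaussianInt, toComplex z = w := by
  rw [Submodule.mem_span_singleton]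
  constructor
  · rintro ⟨r, hr⟩; exact ⟨r, by rw [← hr, gsmul_def, mul_one]⟩
  · rintro ⟨z, hz⟩; exact ⟨z, by rw [gsmul_def, mul_one, hz]⟩

/-- The half-lattice point attached to a pair in `(ℤ/2)²`. -/
noncomputable def c (p : ZMod 2 × ZMod 2) : ℂ :=
  (p.1.val : ℂ) / 2 + (p.2.val : ℂ) / 2 * Complex.I

lemma c_re (p : ZMod 2 × ZMod 2) : (c p).re = (p.1.val : ℝ) / 2 := by
  simp [c, Complex.div_re, -ZMod.natCast_val]

lemma c_im (p : ZMod 2 × ZMod 2) : (c p).im = (p.2.val : ℝ) / 2 := by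
  simp [c, Complex.div_re, Complex.div_im, -ZMod.natCast_val]

lemma half_ne_int (n : ℤ) : (n : ℝ) ≠ 1 / 2 ∧ (n : ℝ) ≠ -(1 / 2) := by
  constructor <;> intro h
  · have h2 : ((2 * n : ℤ) : ℝ) = 1 := by push_cast; linarith
    have : (2 * n : ℤ) = 1 := by exact_mod_cast h2
    omega
  · have h2 : ((2 * n : ℤ) : ℝ) = -1 := by push_cast; linarith
    have : (2 * n : ℤ) = -1 := by exact_mod_cast h2
    omega

lemma val_half_eq (a a' : ZMod 2) (n : ℤ)
    (h : (n : ℝ) = (a.val : ℝ) / 2 - (a'.val : ℝ) / 2) : a = a' := by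
  fin_cases a <;> fin_cases a' <;>
    norm_num [ZMod.val_zero, ZMod.val_one, -ZMod.natCast_val, ZMod.val] at h ⊢ <;>
  · first
    | exact absurd h (half_ne_int n).1
    | exact absurd h (half_ne_int n).2
    | rfl

lemma c_inj : Function.Injective fun p => (Submodule.Quotient.mk (c p) : ℂ ⧸ Λ) := by
  intro p q h
  rw [Submodule.Quotient.eq, mem_Lambda] at h
  obtain ⟨z, hz⟩ := h
  have hre : (z.re : ℝ) = (p.1.val : ℝ) / 2 - (q.1.val : ℝ) / 2 := by
    have := congrArg Complex.re hz
    simpa [← intCast_re, c_re, -ZMod.natCast_val] using this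
  have him : (z.im : ℝ) = (p.2.val : ℝ) / 2 - (q.2.val : ℝ) / 2 := by
    have := congrArg Complex.im hz
    simpa [← intCast_im, c_im, -ZMod.natCast_val] using this
  exact Prod.ext (val_half_eq _ _ _ hre) (val_half_eq _ _ _ him)

lemma smul_c (p : ZMod 2 × ZMod 2) :
    (Zsqrtd.sqrtd : GaussianInt) • (Submodule.Quotient.mk (c p) : ℂ ⧸ Λ) =
      Submodule.Quotient.mk (c (p.2, p.1)) := by
  rw [← Submodule.Quotient.mk_smul, Submodule.Quotient.eq, mem_Lambda]
  refine ⟨⟨-(p.2.val : ℤ), 0⟩, ?_⟩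
  rw [toComplex_def', gsmul_def, toComplex_sqrtd]
  simp only [c]
  push_cast
  linear_combination (-(p.2.val : ℂ) / 2) * Complex.I_sq

lemma two_dvd_val_sub (n : ℤ) : (2 : ℤ) ∣ ((n : ZMod 2).val : ℤ) - n := by
  have : ((((n : ZMod 2).val : ℤ) - n : ℤ) : ZMod 2) = 0 := by
    push_cast [ZMod.natCast_val, ZMod.intCast_cast, ZMod.cast_id]
    ring
  exact_mod_cast (ZMod.intCast_zmod_eq_zero_iff_dvd _ 2).1 this

/-- Every 2-torsion point of `ℂ ⧸ Λ` is of the form `mk (c p)`. -/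
lemma c_surj (t : ℂ ⧸ Λ)
    (ht : (Zsqrtd.sqrtd : GaussianInt) • ((Zsqrtd.sqrtd : GaussianInt) • t) = t) :
    ∃ p : ZMod 2 × ZMod 2, Submodule.Quotient.mk (c p) = t := by
  obtain ⟨w, rfl⟩ := Submodule.Quotient.mk_surjective Λ t
  rw [← Submodule.Quotient.mk_smul, ← Submodule.Quotient.mk_smul,
    Submodule.Quotient.eq, mem_Lambda] at ht
  obtain ⟨z, hz⟩ := ht
  have hzw : toComplex (-z) = 2 * w := by
    have hii : (Zsqrtd.sqrtd : GaussianInt) • ((Zsqrtd.sqrtd : GaussianInt) • w) = -w := by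
      rw [gsmul_def, gsmul_def, toComplex_sqrtd]
      linear_combination w * Complex.I_sq
    rw [hii] at hz
    rw [toComplex_neg, hz]; ring
  set z' := -z with hz'
  refine ⟨((z'.re : ZMod 2), (z'.im : ZMod 2)), ?_⟩
  rw [Submodule.Quotient.eq, mem_Lambda]
  obtain ⟨k, hk⟩ := two_dvd_val_sub z'.re
  obtain ⟨l, hl⟩ := two_dvd_val_sub z'.im
  refine ⟨⟨k, l⟩, ?_⟩
  have hw : w = (z'.re : ℂ) / 2 + (z'.im : ℂ) / 2 * Complex.I := by
    rw [toComplex_def] at hzw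
    field_simp
    linear_combination -hzw
  rw [hw, toComplex_def']
  simp only [c]
  have hre' : ((((z'.re : ZMod 2)).val : ℂ)) = (z'.re : ℂ) + 2 * (k : ℂ) := by
    have h0 : (((z'.re : ZMod 2).val : ℤ)) = z'.re + 2 * k := by omega
    have := congrArg (fun n : ℤ => (n : ℂ)) h0
    push_cast at this ⊢
    exact this
  have him' : ((((z'.im : ZMod 2)).val : ℂ)) = (z'.im : ℂ) + 2 * (l : ℂ) := by
    have h0 : (((z'.im : ZMod 2).val : ℤ)) = z'.im + 2 * l := by omega
    have := congrArg (fun n : ℤ => (n : ℂ)) h0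
    push_cast at this ⊢
    exact this
  rw [hre', him']
  ring

/-- The combinatorial model. -/
abbrev M := Fin 3 → ZMod 2 × ZMod 2

def sw (m : M) : M := fun j => ((m j).2, (m j).1)

lemma sw_sw (m : M) : sw (sw m) = m := by funext j; simp [sw]

noncomputable def F (m : M) : Fin 3 → ℂ ⧸ Λ := fun j => Submodule.Quotient.mk (c (m j))

lemma smul_F (m : M) : (Zsqrtd.sqrtd : GaussianInt) • F m = F (sw m) := by
  funext j
  rw [Pi.smul_apply]
  exact smul_c (m j)

abbrev S := {x : Fin 3 → ℂ ⧸ Λ //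
  (Zsqrtd.sqrtd : GaussianInt) • ((Zsqrtd.sqrtd : GaussianInt) • x) = x}

noncomputable def F' (m : M) : S :=
  ⟨F m, by rw [smul_F, smul_F, sw_sw]⟩

lemma F'_bij : Function.Bijective F' := by
  constructor
  · intro m m' h
    funext j
    apply c_inj
    exact congrFun (congrArg Subtype.val h) j
  · rintro ⟨x, hx⟩
    have : ∀ j, ∃ p : ZMod 2 × ZMod 2, Submodule.Quotient.mk (c p) = x j := by
      intro j
      apply c_surj
      have := congrFun hx j
      simpa using this
    choose m hm using this
    exact ⟨m, Subtype.ext (funext hm)⟩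

noncomputable def e : M ≃ S := Equiv.ofBijective F' F'_bij

def msetoid : Setoid M where
  r x y := x = y ∨ sw x = y
  iseqv := by
    constructor
    · intro x; exact Or.inl rfl
    · rintro x y (rfl | h)
      · exact Or.inl rfl
      · exact Or.inr (by rw [← h, sw_sw])
    · rintro x y z (rfl | h) (rfl | h')
      · exact Or.inl rfl
      · exact Or.inr h'
      · exact Or.inr h
      · rw [← h, sw_sw] at h'; exact Or.inl h'

instance : Fintype (Quotient msetoid) :=
  @Quotient.fintype M _ msetoid
    (fun x y => inferInstanceAs (Decidable (x = y ∨ sw x = y)))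

def quotEquiv : Quot (fun x y : M => sw x = y) ≃ Quotient msetoid where
  toFun := Quot.lift (Quotient.mk msetoid) (fun a b h => Quotient.sound (Or.inr h))
  invFun := Quotient.lift (Quot.mk _) (by
    rintro a b (rfl | h)
    · rfl
    · exact Quot.sound h)
  left_inv := by rintro ⟨x⟩; rfl
  right_inv := by rintro ⟨x⟩; rfl

end Step12

/-- Steps 1–2 of Theorem 5.1: the quotient of the `64`-element set
`S = {x ∈ T³ : i·(i·x) = x}` by the equivalence relation identifying `x`
with `i·x` has exactly `36` elements. -/
theorem stmt_11 :
    Nat.card (Quot (fun x y :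
        {x : Fin 3 → ℂ ⧸ (Submodule.span GaussianInt ({1} : Set ℂ)) //
          (Zsqrtd.sqrtd : GaussianInt) • ((Zsqrtd.sqrtd : GaussianInt) • x) = x} =>
        (Zsqrtd.sqrtd : GaussianInt) • x.val = y.val)) = 36 := by
  have key : ∀ m m' : Step12.M, Step12.sw m = m' ↔
      (Zsqrtd.sqrtd : GaussianInt) • (Step12.e m).val = (Step12.e m').val := by
    intro m m'
    have h1 : (Step12.e m).val = Step12.F m := rfl
    have h2 : (Step12.e m').val = Step12.F m' := rfl
    rw [h1, h2, Step12.smul_F]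
    constructor
    · intro h; rw [h]
    · intro h
      exact Step12.F'_bij.1 (a₁ := Step12.sw m) (a₂ := m') (Subtype.ext h)
  have e2 : Quot (fun x y : Step12.M => Step12.sw x = y) ≃
      Quot (fun x y : Step12.S =>
        (Zsqrtd.sqrtd : GaussianInt) • x.val = y.val) :=
    Quot.congr Step12.e key
  rw [Nat.card_congr e2.symm, Nat.card_congr Step12.quotEquiv,
    Nat.card_eq_fintype_card]
  decide
end
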